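/- Let w, θ ∈ ℂ and let v ∈ ℝ with v ≠ 0. Define r_t := 1 + Re(conj(w)·θ)/|v| + |w|²|θ|²/(4v²) and r_r := |w|²|θ|²/(4v²). Then r_t = |1 + conj(w)·θ/(2|v|)|², so r_t ≥ 0, and √r_t + √r_r ≥ 1. -/

import Mathlib

open Complex

/-- For `w, θ ∈ ℂ` and `v ≠ 0`, with
`r_t = 1 + Re(w̄θ)/|v| + |w|²|θ|²/(4v²)` and `r_r = |w|²|θ|²/(4v²)`:
`r_t = |1 + w̄θ/(2|v|)|²`, hence `r_t ≥ 0`, and `√r_t + √r_r ≥ 1`. -/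
theorem sqrt_rates_sum_ge_one (v : ℝ) (hv : v ≠ 0) (w θ : ℂ) (rt rr : ℝ)
    (hrt : rt = 1 + ((starRingEnd ℂ) w * θ).re / |v|
      + ‖w‖ ^ 2 * ‖θ‖ ^ 2 / (4 * v ^ 2))
    (hrr : rr = ‖w‖ ^ 2 * ‖θ‖ ^ 2 / (4 * v ^ 2)) :
    rt = ‖1 + (starRingEnd ℂ) w * θ / ((2 * |v| : ℝ) : ℂ)‖ ^ 2 ∧
    0 ≤ rt ∧
    1 ≤ Real.sqrt rt + Real.sqrt rr := by
  have hav : |v| ≠ 0 := abs_ne_zero.mpr hv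
  have hv2 : v ^ 2 = |v| ^ 2 := (_root_.sq_abs v).symm
  set z : ℂ := (starRingEnd ℂ) w * θ / ((2 * |v| : ℝ) : ℂ) with hz
  have habsz : ‖z‖ ^ 2 = ‖w‖ ^ 2 * ‖θ‖ ^ 2 / (4 * v ^ 2) := by
    rw [hz, norm_div, norm_mul, Complex.norm_conj, Complex.norm_real, Real.norm_eq_abs, _root_.abs_of_nonneg
      (by positivity : (0:ℝ) ≤ 2 * |v|), div_pow, mul_pow, mul_pow, hv2]
    ring
  have hre : z.re = ((starRingEnd ℂ) w * θ).re / (2 * |v|) := by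
    rw [hz, Complex.div_ofReal_re]
  have h1 : rt = ‖1 + z‖ ^ 2 := by
    rw [Complex.sq_norm, Complex.normSq_add, Complex.normSq_one, one_mul, Complex.conj_re,
      ← Complex.sq_norm z, habsz, hre, hrt, hv2]
    field_simp
    ring
  refine ⟨h1, h1 ▸ sq_nonneg _, ?_⟩
  have hs1 : Real.sqrt rt = ‖1 + z‖ := by
    rw [h1, Real.sqrt_sq (norm_nonneg _)]
  have hs2 : Real.sqrt rr = ‖z‖ := by
    rw [hrr, ← habsz, Real.sqrt_sq (norm_nonneg _)]
  rw [hs1, hs2]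
  calc (1:ℝ) = ‖(1 + z) - z‖ := by simp
    _ ≤ ‖1 + z‖ + ‖z‖ := by
        simpa using norm_sub_le (1 + z) z
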